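/- For a finite set Z ⊂ D \ {0} of distinct points with Shapiro-Shields inner function g_Z, the distance from 1 to [g_Z] satisfies dist²_H(1, [g_Z]) = v K_Z^{-1} v*, where v = (1, ..., 1). -/

import Mathlib

open Filter Topology
open scoped InnerProductSpace ComplexConjugate

/-- A weighted Hardy space `H²_ω`: a Hilbert space with an orthogonal basis of
monomials `e k` (representing `z^k`) with `‖e k‖² = ω k`, together with the shift
operator `S` (multiplication by `z`). -/
structure WeightedHardySpace where
  E : Type
  [instN : NormedAddCommGroup E]
  [instI : InnerProductSpace ℂ E]
  [instC : CompleteSpace E]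
  ω : ℕ → ℝ
  hωpos : ∀ k, 0 < ω k
  hω0 : ω 0 = 1
  hωlim : Tendsto (fun k => ω k / ω (k + 1)) atTop (𝓝 1)
  e : ℕ → E
  horth : ∀ j k, ⟪e j, e k⟫_ℂ = if j = k then (ω k : ℂ) else 0
  hdense : (Submodule.span ℂ (Set.range e)).topologicalClosure = ⊤
  S : E →L[ℂ] E
  hshift : ∀ k, S (e k) = e (k + 1)

attribute [instance] WeightedHardySpace.instN WeightedHardySpace.instI WeightedHardySpace.instC

namespace WeightedHardySpace

variable (H : WeightedHardySpace)

/-- The constant function `1`. -/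
noncomputable def one : H.E := H.e 0

/-- The `k`-th Taylor coefficient of `f`. -/
noncomputable def coeff (f : H.E) (k : ℕ) : ℂ := ⟪H.e k, f⟫_ℂ / (H.ω k : ℂ)

/-- Evaluation of `f` at a point `w` of the unit disk. -/
noncomputable def eval (f : H.E) (w : ℂ) : ℂ := ∑' k, H.coeff f k * w ^ k

/-- Multiplication of `f` by the polynomial `p`. -/
noncomputable def polyMul (p : Polynomial ℂ) (f : H.E) : H.E :=
  ∑ i ∈ p.support, p.coeff i • ((H.S ^ i) f)

/-- The closed shift-invariant subspace `[f]` generated by `f`. -/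
noncomputable def genSub (f : H.E) : Submodule ℂ H.E :=
  (Submodule.span ℂ (Set.range fun p : Polynomial ℂ => H.polyMul p f)).topologicalClosure

/-- `f` is `H`-inner: unit norm and `⟨z^j f, f⟩ = 0` for all `j ≥ 1`. -/
def IsInner (f : H.E) : Prop :=
  ‖f‖ = 1 ∧ ∀ j : ℕ, 1 ≤ j → ⟪(H.S ^ j) f, f⟫_ℂ = 0

end WeightedHardySpace


namespace WeightedHardySpace

variable (H : WeightedHardySpace)

-- helpers
lemma omega_ne (m : ℕ) : (H.ω m : ℂ) ≠ 0 := by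
  exact_mod_cast (H.hωpos m).ne'

lemma coeff_e (j m : ℕ) : H.coeff (H.e j) m = if m = j then 1 else 0 := by
  unfold coeff
  rw [H.horth m j]
  split_ifs with h
  · subst h; exact div_self (H.omega_ne m)
  · exact zero_div _

lemma eval_e (j : ℕ) (w : ℂ) : H.eval (H.e j) w = w ^ j := by
  unfold eval
  rw [tsum_eq_single j]
  · rw [H.coeff_e, if_pos rfl, one_mul]
  · intro b hb
    rw [H.coeff_e, if_neg hb, zero_mul]

lemma eval_one (w : ℂ) : H.eval H.one w = 1 := by
  simpa [WeightedHardySpace.one] using H.eval_e 0 w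

lemma inner_one_left (g : H.E) : ⟪H.one, g⟫_ℂ = H.coeff g 0 := by
  unfold one coeff
  rw [H.hω0]
  simp

lemma dense_span : Dense (Submodule.span ℂ (Set.range H.e) : Set H.E) :=
  Submodule.dense_iff_topologicalClosure_eq_top.mpr H.hdense

lemma inner_e0_shift (f : H.E) : ⟪H.e 0, H.S f⟫_ℂ = 0 := by
  have h : (innerSL ℂ (H.e 0)).comp H.S = 0 := by
    apply ContinuousLinearMap.ext_on H.dense_span
    rintro x ⟨m, rfl⟩
    simp only [ContinuousLinearMap.comp_apply, innerSL_apply_apply, ContinuousLinearMap.zero_apply,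
      H.hshift]
    rw [H.horth]
    simp
  have := DFunLike.congr_fun h f
  simpa using this

lemma inner_e0_pow (j : ℕ) (hj : 1 ≤ j) (f : H.E) : ⟪H.e 0, (H.S ^ j) f⟫_ℂ = 0 := by
  obtain ⟨j', rfl⟩ := Nat.exists_eq_add_of_le hj
  rw [add_comm, pow_succ', ContinuousLinearMap.mul_apply]
  exact H.inner_e0_shift _

lemma inner_one_pow (j : ℕ) (hj : 1 ≤ j) (f : H.E) : ⟪H.one, (H.S ^ j) f⟫_ℂ = 0 :=
  H.inner_e0_pow j hj f

lemma inner_shift_of_eval (κ : H.E) (w : ℂ) (hκ : ∀ g, ⟪κ, g⟫_ℂ = H.eval g w) (f : H.E) :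
    ⟪κ, H.S f⟫_ℂ = w * ⟪κ, f⟫_ℂ := by
  have h : (innerSL ℂ κ).comp H.S = w • innerSL ℂ κ := by
    apply ContinuousLinearMap.ext_on H.dense_span
    rintro x ⟨m, rfl⟩
    simp only [ContinuousLinearMap.comp_apply, innerSL_apply_apply, ContinuousLinearMap.smul_apply,
      H.hshift, hκ, H.eval_e, smul_eq_mul]
    rw [pow_succ']
  have := DFunLike.congr_fun h f
  simpa using this

lemma inner_pow_of_eval (κ : H.E) (w : ℂ) (hκ : ∀ g, ⟪κ, g⟫_ℂ = H.eval g w) (j : ℕ) (f : H.E) :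
    ⟪κ, (H.S ^ j) f⟫_ℂ = w ^ j * ⟪κ, f⟫_ℂ := by
  induction j with
  | zero => simp
  | succ j ih =>
    rw [pow_succ', ContinuousLinearMap.mul_apply, H.inner_shift_of_eval κ w hκ, ih, pow_succ']
    ring

end WeightedHardySpace

/-- Theorem 3.6: `dist²(1, [g_Z]) = v K_Z⁻¹ v*` where `v = (1,…,1)`, i.e. the sum of
all entries of the inverse Gram matrix. -/
theorem dist_sq_shapiroShields (H : WeightedHardySpace) (n : ℕ) (z : Fin n → ℂ)
    (hz : ∀ i, ‖z i‖ < 1) (hz0 : ∀ i, z i ≠ 0) (hinj : Function.Injective z)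
    (k : Fin n → H.E) (hk : ∀ i, ∀ g : H.E, ⟪k i, g⟫_ℂ = H.eval g (z i)) :
    let K : Matrix (Fin n) (Fin n) ℂ := Matrix.of fun s t => H.eval (k s) (z t)
    let fZ : H.E := K.det • H.one -
      ∑ s : Fin n, (K.updateRow s (fun _ => (1 : ℂ))).det • k s
    let gZ : H.E := ((‖fZ‖ : ℂ))⁻¹ • fZ
    ((Metric.infDist H.one (H.genSub gZ : Set H.E)) ^ 2 : ℂ) = ∑ i, ∑ j, K⁻¹ i j := by
  intro K fZ gZ
  have hself : ∀ x : H.E, ⟪x, x⟫_ℂ = ((‖x‖ : ℝ) : ℂ) ^ 2 := fun x => by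
    exact_mod_cast inner_self_eq_norm_sq_to_K x
  set d : ℂ := K.det with hd_def
  set a : Fin n → ℂ := fun s => (K.updateRow s (fun _ => 1)).det with ha_def
  set q : ℂ := ∑ i, ∑ j, K⁻¹ i j with hq_def
  -- basic inner product facts
  have hK : ∀ s t, K s t = ⟪k t, k s⟫_ℂ := fun s t => ((hk t (k s))).symm
  have hke : ∀ s (m : ℕ), ⟪k s, H.e m⟫_ℂ = z s ^ m := fun s m => by
    rw [hk, H.eval_e]
  have hkone : ∀ s, ⟪k s, H.one⟫_ℂ = 1 := fun s => by
    rw [hk, H.eval_one]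
  have honeone : ⟪H.one, H.one⟫_ℂ = 1 := by
    show ⟪H.e 0, H.e 0⟫_ℂ = 1
    rw [H.horth]; simp [H.hω0]
  have honek : ∀ s, ⟪H.one, k s⟫_ℂ = 1 := fun s => by
    rw [← inner_conj_symm, hkone, map_one]
  -- Cramer's rule
  have hcramer : ∀ t, (∑ s, a s * K s t) = d := by
    intro t
    have h1 := Matrix.mulVec_cramer K.transpose (fun _ => (1:ℂ))
    have h2 := congrFun h1 t
    simp only [Matrix.mulVec, dotProduct, Matrix.transpose_apply, Matrix.det_transpose,
      Pi.smul_apply, smul_eq_mul, mul_one] at h2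
    rw [hd_def, ← h2]
    refine Finset.sum_congr rfl fun s _ => ?_
    rw [Matrix.cramer_transpose_apply]
    simp only [ha_def]
    ring
  -- determinant nonzero
  have hdet : d ≠ 0 := by
    intro hd0
    obtain ⟨c0, hc0, hcK⟩ := Matrix.exists_mulVec_eq_zero_iff.mpr hd0
    set u : H.E := ∑ j, (conj (c0 j)) • k j with hu_def
    have hinner_u : ∀ g : H.E, ⟪u, g⟫_ℂ = ∑ j, c0 j * ⟪k j, g⟫_ℂ := by
      intro g
      rw [hu_def, sum_inner]
      exact Finset.sum_congr rfl fun j _ => by rw [inner_smul_left, Complex.conj_conj]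
    have hui : ∀ i, ⟪u, k i⟫_ℂ = 0 := by
      intro i
      rw [hinner_u]
      have hK0 := congrFun hcK i
      simp only [Matrix.mulVec, dotProduct, Pi.zero_apply] at hK0
      rw [← hK0]
      exact Finset.sum_congr rfl fun j _ => by rw [hK i j]; ring
    have hu0 : u = 0 := by
      rw [← inner_self_eq_zero (𝕜 := ℂ), hinner_u]
      refine Finset.sum_eq_zero fun j _ => ?_
      rw [← inner_conj_symm, hui j, map_zero, mul_zero]
    have hpow : ∀ m : ℕ, ∑ j, c0 j * z j ^ m = 0 := by
      intro m
      have h3 := hinner_u (H.e m)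
      rw [hu0, inner_zero_left] at h3
      rw [show (∑ j, c0 j * z j ^ m) = ∑ j, c0 j * ⟪k j, H.e m⟫_ℂ from
        Finset.sum_congr rfl fun j _ => by rw [hke]]
      exact h3.symm
    have hV : Matrix.mulVec (Matrix.vandermonde z).transpose c0 = 0 := by
      funext i
      simp only [Matrix.mulVec, dotProduct, Matrix.transpose_apply,
        Matrix.vandermonde_apply, Pi.zero_apply]
      rw [← hpow i]
      exact Finset.sum_congr rfl fun j _ => by ring
    have hVdet : ((Matrix.vandermonde z).transpose).det ≠ 0 := by
      rw [Matrix.det_transpose]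
      exact Matrix.det_vandermonde_ne_zero_iff.mpr hinj
    exact hc0 (Matrix.eq_zero_of_mulVec_eq_zero hVdet hV)
  -- inner products against fZ
  have hfZ_right : ∀ g : H.E, ⟪g, fZ⟫_ℂ = d * ⟪g, H.one⟫_ℂ - ∑ s, a s * ⟪g, k s⟫_ℂ := by
    intro g
    simp only [fZ, inner_sub_right, inner_smul_right, inner_sum]
    rfl
  have hkfZ : ∀ s, ⟪k s, fZ⟫_ℂ = 0 := by
    intro s
    rw [hfZ_right, hkone, mul_one]
    have : ∀ t, ⟪k s, k t⟫_ℂ = K t s := fun t => (hK t s).symm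
    rw [Finset.sum_congr rfl fun t _ => by rw [this t]]
    rw [hcramer s, sub_self]
  have honefZ : ⟪H.one, fZ⟫_ℂ = d - ∑ s, a s := by
    rw [hfZ_right, honeone, mul_one]
    simp [honek]
  set f0 : ℂ := d - ∑ s, a s with hf0_def
  have hfZ_left : ∀ g : H.E, ⟪fZ, g⟫_ℂ =
      conj d * ⟪H.one, g⟫_ℂ - ∑ s, conj (a s) * ⟪k s, g⟫_ℂ := by
    intro g
    simp only [fZ, inner_sub_left, inner_smul_left, sum_inner]
    rfl
  have hN2 : ((‖fZ‖ : ℂ)) ^ 2 = conj d * f0 := by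
    rw [← hself, hfZ_left, honefZ]
    simp [hkfZ]
  -- fZ ≠ 0
  have hfZ0 : fZ ≠ 0 := by
    intro h0
    have hm : ∀ m : ℕ, conj d * ⟪H.one, H.e m⟫_ℂ - ∑ s, conj (a s) * (z s ^ m) = 0 := by
      intro m
      have h3 := hfZ_left (H.e m)
      rw [h0, inner_zero_left] at h3
      rw [show (∑ s, conj (a s) * (z s ^ m)) = ∑ s, conj (a s) * ⟪k s, H.e m⟫_ℂ from
        Finset.sum_congr rfl fun s _ => by rw [hke]]
      exact h3.symm
    have honee : ∀ m, ⟪H.one, H.e m⟫_ℂ = if (0:ℕ) = m then (H.ω m : ℂ) else 0 :=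
      fun m => H.horth 0 m
    have hma : ∀ i : Fin n, ∑ s, conj (a s) * z s ^ ((i : ℕ)+1) = 0 := by
      intro i
      have h4 := hm ((i:ℕ)+1)
      rw [honee] at h4
      simpa using h4
    set W : Matrix (Fin n) (Fin n) ℂ :=
      Matrix.of fun i j => z j * (Matrix.vandermonde z).transpose i j with hW_def
    have hWdet : W.det ≠ 0 := by
      rw [hW_def, Matrix.det_mul_row]
      refine mul_ne_zero (Finset.prod_ne_zero_iff.mpr fun j _ => hz0 j) ?_
      rw [Matrix.det_transpose]
      exact Matrix.det_vandermonde_ne_zero_iff.mpr hinj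
    have hWv : Matrix.mulVec W (fun s => conj (a s)) = 0 := by
      funext i
      simp only [hW_def, Matrix.mulVec, dotProduct, Matrix.of_apply,
        Matrix.transpose_apply, Matrix.vandermonde_apply, Pi.zero_apply]
      rw [← hma i]
      exact Finset.sum_congr rfl fun s _ => by ring
    have ha0 : (fun s => conj (a s)) = 0 := Matrix.eq_zero_of_mulVec_eq_zero hWdet hWv
    have hzero : ∀ s, conj (a s) = 0 := fun s => congrFun ha0 s
    have h5 := hm 0
    rw [honee] at h5
    simp only [if_pos rfl, H.hω0, Complex.ofReal_one, mul_one, pow_zero, hzero, zero_mul,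
      Finset.sum_const_zero, sub_zero] at h5
    exact hdet (by simpa using congrArg (starRingEnd ℂ) h5)
  have hNne : ((‖fZ‖ : ℝ) : ℂ) ≠ 0 := by
    simpa [Complex.ofReal_ne_zero, norm_eq_zero] using hfZ0
  have hf0ne : f0 ≠ 0 := by
    intro h
    apply hNne
    have : ((‖fZ‖ : ℂ)) ^ 2 = 0 := by rw [hN2, h, mul_zero]
    exact pow_eq_zero_iff (by norm_num) |>.mp this
  -- sum of a
  have hsum_a : ∑ s, a s = d * q := by
    have hunit : IsUnit K.det := isUnit_iff_ne_zero.mpr hdet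
    have hKinv : K * K⁻¹ = 1 := Matrix.mul_nonsing_inv K hunit
    have hva : Matrix.vecMul a K = fun _ => d := by
      funext t
      simp only [Matrix.vecMul, dotProduct]
      exact hcramer t
    have h1 : a = Matrix.vecMul (fun _ => d) K⁻¹ := by
      calc a = Matrix.vecMul a 1 := by rw [Matrix.vecMul_one]
        _ = Matrix.vecMul a (K * K⁻¹) := by rw [hKinv]
        _ = Matrix.vecMul (Matrix.vecMul a K) K⁻¹ := by rw [Matrix.vecMul_vecMul]
        _ = _ := by rw [hva]
    calc ∑ s, a s = ∑ s, ∑ t, d * K⁻¹ t s := by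
          rw [h1]
          exact Finset.sum_congr rfl fun s _ => by
            simp [Matrix.vecMul, dotProduct]
      _ = d * q := by
          rw [hq_def, Finset.sum_comm, Finset.mul_sum]
          exact Finset.sum_congr rfl fun i _ => by rw [Finset.mul_sum]
  -- norm of gZ
  have hgnorm : ‖gZ‖ = 1 := by
    simp only [gZ, norm_smul, norm_inv, Complex.norm_real, Real.norm_eq_abs,
      abs_norm]
    rw [inv_mul_cancel₀ (norm_ne_zero_iff.mpr hfZ0)]
  have hgg : ⟪gZ, gZ⟫_ℂ = 1 := by
    rw [hself, hgnorm]; norm_num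
  -- shift orthogonality
  have hSfZ : ∀ j, 1 ≤ j → ⟪(H.S ^ j) fZ, fZ⟫_ℂ = 0 := by
    intro j hj
    rw [← inner_conj_symm]
    have h1 : ⟪fZ, (H.S ^ j) fZ⟫_ℂ = 0 := by
      rw [hfZ_left]
      have h2 : ⟪H.one, (H.S ^ j) fZ⟫_ℂ = 0 := H.inner_e0_pow j hj fZ
      have h3 : ∀ s, ⟪k s, (H.S ^ j) fZ⟫_ℂ = 0 := fun s => by
        rw [H.inner_pow_of_eval (k s) (z s) (hk s) j fZ, hkfZ, mul_zero]
      simp only [h2, h3, mul_zero, Finset.sum_const_zero, sub_zero]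
    rw [h1, map_zero]
  have hSgZ : ∀ j, 1 ≤ j → ⟪(H.S ^ j) gZ, gZ⟫_ℂ = 0 := by
    intro j hj
    simp only [gZ, map_smul, inner_smul_left, inner_smul_right, hSfZ j hj, mul_zero]
  have hSgZone : ∀ j, 1 ≤ j → ⟪(H.S ^ j) gZ, H.one⟫_ℂ = 0 := by
    intro j hj
    rw [← inner_conj_symm, H.inner_one_pow j hj, map_zero]
  -- the projection data
  set γ : ℂ := ⟪H.one, gZ⟫_ℂ with hγ_def
  set c : ℂ := conj γ with hc_def
  set hv : H.E := H.one - c • gZ with hv_def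
  have hgone : ⟪gZ, H.one⟫_ℂ = c := by rw [← inner_conj_symm]
  -- gZ ∈ [gZ]
  have hg_in : gZ ∈ H.genSub gZ := by
    apply Submodule.le_topologicalClosure
    apply Submodule.subset_span
    refine ⟨1, ?_⟩
    show H.polyMul 1 gZ = gZ
    unfold WeightedHardySpace.polyMul
    have hsupp : (1 : Polynomial ℂ).support = {0} := by
      rw [← Polynomial.C_1, Polynomial.support_C]
      exact one_ne_zero
    rw [hsupp]
    simp
  have hp_mem : c • gZ ∈ H.genSub gZ := Submodule.smul_mem _ _ hg_in
  -- orthogonality of hv to [gZ]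
  have hpoly : ∀ p : Polynomial ℂ, ⟪H.polyMul p gZ, hv⟫_ℂ = 0 := by
    intro p
    unfold WeightedHardySpace.polyMul
    rw [sum_inner]
    apply Finset.sum_eq_zero
    intro i _
    rw [inner_smul_left]
    rcases Nat.eq_zero_or_pos i with hi | hi
    · subst hi
      simp only [pow_zero, ContinuousLinearMap.one_apply, hv_def, inner_sub_right,
        inner_smul_right, hgone, hgg, mul_one, sub_self, mul_zero]
    · simp only [hv_def, inner_sub_right, inner_smul_right, hSgZone i hi, hSgZ i hi,
        mul_zero, sub_zero, mul_zero]
  have horth_mem : ∀ y ∈ H.genSub gZ, ⟪hv, y⟫_ℂ = 0 := by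
    have hle : H.genSub gZ ≤ LinearMap.ker (innerSL ℂ hv : H.E →ₗ[ℂ] ℂ) := by
      apply Submodule.topologicalClosure_minimal
      · rw [Submodule.span_le]
        rintro x ⟨p, rfl⟩
        simp only [SetLike.mem_coe, LinearMap.mem_ker, ContinuousLinearMap.coe_coe,
          innerSL_apply_apply]
        rw [← inner_conj_symm, hpoly, map_zero]
      · exact ContinuousLinearMap.isClosed_ker _
    intro y hy
    have := hle hy
    simpa using this
  -- distance computation
  have hdist : Metric.infDist H.one (H.genSub gZ : Set H.E) = ‖hv‖ := by
    apply le_antisymm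
    · have h1 := Metric.infDist_le_dist_of_mem (x := H.one) hp_mem
      rwa [dist_eq_norm, ← hv_def] at h1
    · by_contra hlt
      push_neg at hlt
      obtain ⟨y, hy, hdy⟩ := (Metric.infDist_lt_iff ⟨0, Submodule.zero_mem _⟩).mp hlt
      have hmem : c • gZ - y ∈ H.genSub gZ := Submodule.sub_mem _ hp_mem hy
      have hio : ⟪hv, c • gZ - y⟫_ℂ = 0 := horth_mem _ hmem
      have hdecomp : H.one - y = hv + (c • gZ - y) := by rw [hv_def]; abel
      have hns := norm_add_sq (𝕜 := ℂ) hv (c • gZ - y)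
      rw [hio] at hns
      simp only [map_zero, mul_zero, add_zero] at hns
      have hle : ‖hv‖ ≤ ‖H.one - y‖ := by
        rw [hdecomp]
        nlinarith [norm_nonneg (hv + (c • gZ - y)), norm_nonneg hv,
          norm_nonneg (c • gZ - y), sq_nonneg (‖c • gZ - y‖)]
      rw [dist_eq_norm] at hdy
      linarith
  -- norm of hv
  have hnormh : ((‖hv‖ : ℝ) : ℂ) ^ 2 = 1 - γ * c := by
    rw [← hself]
    simp only [hv_def, inner_sub_left, inner_sub_right, inner_smul_left, inner_smul_right,
      honeone, hgone, hgg, ← hγ_def, ← hc_def, mul_one]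
    rw [hc_def]
    ring_nf
  -- final algebra
  rw [hdist, hnormh]
  have hγval : γ = ((‖fZ‖ : ℂ))⁻¹ * f0 := by
    rw [hγ_def]
    simp only [gZ, inner_smul_right, honefZ, hf0_def]
  have hcval : c = ((‖fZ‖ : ℂ))⁻¹ * conj f0 := by
    rw [hc_def, hγval, map_mul, map_inv₀, Complex.conj_ofReal]
  have hconjf0 : d * conj f0 = conj d * f0 := by
    have h1 : conj (((‖fZ‖ : ℂ)) ^ 2) = ((‖fZ‖ : ℂ)) ^ 2 := by
      rw [← Complex.ofReal_pow, Complex.conj_ofReal]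
    rw [hN2] at h1
    rw [map_mul, Complex.conj_conj] at h1
    linear_combination h1
  have hf0q : f0 = d * (1 - q) := by
    rw [hf0_def, hsum_a]; ring
  -- γ * c = 1 - q
  have hkey : γ * c = 1 - q := by
    have hNsq : ((‖fZ‖ : ℂ)) ^ 2 ≠ 0 := pow_ne_zero _ hNne
    apply mul_right_cancel₀ (mul_ne_zero hNsq hdet)
    rw [hγval, hcval]
    have : ((‖fZ‖:ℂ))⁻¹ * f0 * (((‖fZ‖:ℂ))⁻¹ * conj f0) * (((‖fZ‖:ℂ))^2 * d)
        = f0 * (d * conj f0) := by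
      field_simp
    rw [this, hconjf0]
    calc f0 * (conj d * f0) = (conj d * f0) * f0 := by ring
      _ = ((‖fZ‖:ℂ))^2 * f0 := by rw [← hN2]
      _ = (1 - q) * (((‖fZ‖:ℂ))^2 * d) := by rw [hf0q]; ring
  rw [hkey]
  ring
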